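/- Given a chain of adjunctions L ⊣ f ⊣ R between categories, the functor L is fully faithful if and only if the functor R is fully faithful. -/

import Mathlib

open CategoryTheory

/-- Given a chain of adjunctions `L ⊣ f ⊣ R`, the functor `L` is fully faithful if and
only if the functor `R` is fully faithful. -/
theorem stmt_1 {C : Type*} [Category C] {D : Type*} [Category D]
    (f : C ⥤ D) (L : D ⥤ C) (R : D ⥤ C) (adjL : L ⊣ f) (adjR : f ⊣ R) :
    (L.Full ∧ L.Faithful) ↔ (R.Full ∧ R.Faithful) := by
  constructor
  · rintro ⟨h1, h2⟩
    have := ((Adjunction.Triple.mk adjL adjR).fullyFaithfulEquiv ⟨fun g => L.preimage g, by simp, by simp⟩)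
    exact ⟨this.full, this.faithful⟩
  · rintro ⟨h1, h2⟩
    have := (((Adjunction.Triple.mk adjL adjR).fullyFaithfulEquiv).symm ⟨fun g => R.preimage g, by simp, by simp⟩)
    exact ⟨this.full, this.faithful⟩
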